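/- Simulation implies provability: if (Γ1;A) ≼_s (Γ2;Δ), where (Γ1;A) is the state whose linear part is the singleton multiset {A}, then Γ2;Δ ⊢ A is derivable in the DILL sequent calculus. -/
import Mathlib


/-- Formulas of the linear-logic fragment: atoms, 1, ⊗, ⊤, &, atomic-antecedent ⊸, !. -/
inductive Formula : Type where
  | atom : ℕ → Formula
  | one : Formula
  | tensor : Formula → Formula → Formula
  | top : Formula
  | with_ : Formula → Formula → Formula
  | limp : ℕ → Formula → Formula
  | bang : Formula → Formula
deriving DecidableEq

/-- Contexts are finite multisets of formulas. -/
abbrev Ctx : Type := Multiset Formula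

/-- A process state (Γ;Δ): unrestricted context Γ and linear context Δ. -/
abbrev State : Type := Ctx × Ctx

/-- Composition of states: ((Γ1;Δ1),(Γ2;Δ2)) = (Γ1,Γ2; Δ1,Δ2). -/
def State.comp (s t : State) : State := (s.1 + t.1, s.2 + t.2)

/-- DILL derivability Γ;Δ ⊢ A. -/
inductive Derives : Ctx → Ctx → Formula → Prop where
  | init (Γ : Ctx) (a : ℕ) : Derives Γ {Formula.atom a} (Formula.atom a)
  | clone {Γ Δ : Ctx} {A C : Formula} :
      Derives (A ::ₘ Γ) (A ::ₘ Δ) C → Derives (A ::ₘ Γ) Δ C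
  | tensorR {Γ Δ₁ Δ₂ : Ctx} {A B : Formula} :
      Derives Γ Δ₁ A → Derives Γ Δ₂ B → Derives Γ (Δ₁ + Δ₂) (Formula.tensor A B)
  | tensorL {Γ Δ : Ctx} {A B C : Formula} :
      Derives Γ (A ::ₘ B ::ₘ Δ) C → Derives Γ (Formula.tensor A B ::ₘ Δ) C
  | oneR (Γ : Ctx) : Derives Γ 0 Formula.one
  | oneL {Γ Δ : Ctx} {C : Formula} :
      Derives Γ Δ C → Derives Γ (Formula.one ::ₘ Δ) C
  | withR {Γ Δ : Ctx} {A B : Formula} :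
      Derives Γ Δ A → Derives Γ Δ B → Derives Γ Δ (Formula.with_ A B)
  | withL₁ {Γ Δ : Ctx} {A₁ A₂ C : Formula} :
      Derives Γ (A₁ ::ₘ Δ) C → Derives Γ (Formula.with_ A₁ A₂ ::ₘ Δ) C
  | withL₂ {Γ Δ : Ctx} {A₁ A₂ C : Formula} :
      Derives Γ (A₂ ::ₘ Δ) C → Derives Γ (Formula.with_ A₁ A₂ ::ₘ Δ) C
  | topR (Γ Δ : Ctx) : Derives Γ Δ Formula.top
  | limpR {Γ Δ : Ctx} {a : ℕ} {B : Formula} :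
      Derives Γ (Formula.atom a ::ₘ Δ) B → Derives Γ Δ (Formula.limp a B)
  | limpL {Γ Δ₁ Δ₂ : Ctx} {a : ℕ} {B C : Formula} :
      Derives Γ Δ₁ (Formula.atom a) → Derives Γ (B ::ₘ Δ₂) C →
      Derives Γ (Formula.limp a B ::ₘ (Δ₁ + Δ₂)) C
  | bangR {Γ : Ctx} {A : Formula} :
      Derives Γ 0 A → Derives Γ 0 (Formula.bang A)
  | bangL {Γ Δ : Ctx} {A C : Formula} :
      Derives (A ::ₘ Γ) Δ C → Derives Γ (Formula.bang A ::ₘ Δ) C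

/-- The logical preorder (Γ1;Δ1) ≼ₗ (Γ2;Δ2). -/
def LogicalPre (s t : State) : Prop :=
  ∀ (Γ' Δ' : Ctx) (C : Formula),
    Derives (Γ' + s.1) (Δ' + s.2) C → Derives (Γ' + t.1) (Δ' + t.2) C

/-- The reduction relation ⇝ on process states. -/
inductive Red : State → State → Prop where
  | tensor (Γ Δ : Ctx) (A B : Formula) :
      Red (Γ, Formula.tensor A B ::ₘ Δ) (Γ, A ::ₘ B ::ₘ Δ)
  | one (Γ Δ : Ctx) :
      Red (Γ, Formula.one ::ₘ Δ) (Γ, Δ)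
  | with₁ (Γ Δ : Ctx) (A₁ A₂ : Formula) :
      Red (Γ, Formula.with_ A₁ A₂ ::ₘ Δ) (Γ, A₁ ::ₘ Δ)
  | with₂ (Γ Δ : Ctx) (A₁ A₂ : Formula) :
      Red (Γ, Formula.with_ A₁ A₂ ::ₘ Δ) (Γ, A₂ ::ₘ Δ)
  | comm (Γ Δ : Ctx) (a : ℕ) (B : Formula) :
      Red (Γ, Formula.atom a ::ₘ Formula.limp a B ::ₘ Δ) (Γ, B ::ₘ Δ)
  | bang (Γ Δ : Ctx) (A : Formula) :
      Red (Γ, Formula.bang A ::ₘ Δ) (A ::ₘ Γ, Δ)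
  | clone (Γ Δ : Ctx) (A : Formula) :
      Red (A ::ₘ Γ, Δ) (A ::ₘ Γ, A ::ₘ Δ)

/-- ⇝*, the reflexive-transitive closure of reduction. -/
def RedStar : State → State → Prop := Relation.ReflTransGen Red

/-- Labels of the LTS: τ, send !a, receive ?a. -/
inductive Label : Type where
  | tau : Label
  | send : ℕ → Label
  | recv : ℕ → Label
deriving DecidableEq

/-- The labeled transition system on states. -/
inductive Step : State → Label → State → Prop where
  | send (Γ Δ : Ctx) (a : ℕ) :
      Step (Γ, Formula.atom a ::ₘ Δ) (Label.send a) (Γ, Δ)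
  | recv (Γ Δ : Ctx) (a : ℕ) (B : Formula) :
      Step (Γ, Formula.limp a B ::ₘ Δ) (Label.recv a) (Γ, B ::ₘ Δ)
  | comm {s₁ s₁' s₂ s₂' : State} {a : ℕ} :
      Step s₁ (Label.send a) s₁' → Step s₂ (Label.recv a) s₂' →
      Step (State.comp s₁ s₂) Label.tau (State.comp s₁' s₂')
  | tensor (Γ Δ : Ctx) (A B : Formula) :
      Step (Γ, Formula.tensor A B ::ₘ Δ) Label.tau (Γ, A ::ₘ B ::ₘ Δ)
  | one (Γ Δ : Ctx) :
      Step (Γ, Formula.one ::ₘ Δ) Label.tau (Γ, Δ)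
  | with₁ (Γ Δ : Ctx) (A₁ A₂ : Formula) :
      Step (Γ, Formula.with_ A₁ A₂ ::ₘ Δ) Label.tau (Γ, A₁ ::ₘ Δ)
  | with₂ (Γ Δ : Ctx) (A₁ A₂ : Formula) :
      Step (Γ, Formula.with_ A₁ A₂ ::ₘ Δ) Label.tau (Γ, A₂ ::ₘ Δ)
  | bang (Γ Δ : Ctx) (A : Formula) :
      Step (Γ, Formula.bang A ::ₘ Δ) Label.tau (A ::ₘ Γ, Δ)
  | clone (Γ Δ : Ctx) (A : Formula) :
      Step (A ::ₘ Γ, Δ) Label.tau (A ::ₘ Γ, A ::ₘ Δ)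

/-- ⇒τ, the reflexive-transitive closure of —τ→. -/
def WeakTau : State → State → Prop :=
  Relation.ReflTransGen (fun s t => Step s Label.tau t)

/-- Weak transition ⇒β: for β = τ it is ⇒τ, otherwise ⇒τ—β→⇒τ. -/
def WeakStep (s : State) (β : Label) (t : State) : Prop :=
  match β with
  | Label.tau => WeakTau s t
  | _ => ∃ u v, WeakTau s u ∧ Step u β v ∧ WeakTau v t

/-- A label is a "non-receive" label α (i.e., τ or a send). -/
def Label.isNonRecv : Label → Prop
  | Label.recv _ => False
  | _ => True

/-- A relation on states is a simulation. -/
def IsSimulation (R : State → State → Prop) : Prop :=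
  ∀ s t, R s t →
    (s.2 = 0 → ∃ Γ₂' : Ctx, WeakTau t (Γ₂', 0) ∧ R (s.1, 0) (Γ₂', 0)) ∧
    (∀ s₁ s₂ : State, s = State.comp s₁ s₂ →
      ∃ t₁ t₂ : State, WeakTau t (State.comp t₁ t₂) ∧ R s₁ t₁ ∧ R s₂ t₂) ∧
    (∀ (α : Label) (s' : State), α.isNonRecv → Step s α s' →
      ∃ t', WeakStep t α t' ∧ R s' t') ∧
    (∀ (a : ℕ) (s' : State), Step s (Label.recv a) s' →
      ∃ t', WeakTau (t.1, Formula.atom a ::ₘ t.2) t' ∧ R s' t')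

/-- The simulation preorder ≼ₛ. -/
def SimPre (s t : State) : Prop :=
  ∃ R : State → State → Prop, IsSimulation R ∧ R s t

/-- Strong barb: (Γ;Δ)↓a. -/
def Barb (s : State) (a : ℕ) : Prop := Formula.atom a ∈ s.2

/-- Weak barb: (Γ;Δ)⇓a. -/
def WeakBarb (s : State) (a : ℕ) : Prop := ∃ t, RedStar s t ∧ Barb t a

def BarbPreserving (R : State → State → Prop) : Prop :=
  ∀ s t a, R s t → Barb s a → WeakBarb t a

def ReductionClosed (R : State → State → Prop) : Prop :=
  ∀ s t s', R s t → Red s s' → ∃ t', RedStar t t' ∧ R s' t'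

def Compositional (R : State → State → Prop) : Prop :=
  ∀ s t u, R s t → R (State.comp s u) (State.comp t u)

def PartitionPreserving (R : State → State → Prop) : Prop :=
  ∀ s t, R s t →
    (s.2 = 0 → ∃ Γ₂' : Ctx, RedStar t (Γ₂', 0) ∧ R (s.1, 0) (Γ₂', 0)) ∧
    (∀ s₁ s₂ : State, s = State.comp s₁ s₂ →
      ∃ t₁ t₂ : State, RedStar t (State.comp t₁ t₂) ∧ R s₁ t₁ ∧ R s₂ t₂)

/-- The contextual preorder ≼_c: the largest barb-preserving, reduction-closed,
compositional, partition-preserving relation on states. -/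
def CtxPre (s t : State) : Prop :=
  ∃ R : State → State → Prop,
    BarbPreserving R ∧ ReductionClosed R ∧ Compositional R ∧ PartitionPreserving R ∧ R s t

/-- ⊗Δ: the ⊗-conjunction of all formulas in Δ (1 if Δ is empty). -/
noncomputable def bigTensor (Δ : Ctx) : Formula :=
  Δ.toList.foldr Formula.tensor Formula.one

/-- !Γ: prefix every formula of Γ with !. -/
def bangCtx (Γ : Ctx) : Ctx := Γ.map Formula.bang

/-- Weakening of the unrestricted context. -/
lemma derives_weaken {Γ Δ : Ctx} {C : Formula} (E : Ctx) (h : Derives Γ Δ C) :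
    Derives (E + Γ) Δ C := by
  induction h with
  | init Γ a => exact Derives.init _ a
  | clone h ih =>
    rw [Multiset.add_cons] at ih ⊢
    exact Derives.clone ih
  | tensorR h₁ h₂ ih₁ ih₂ => exact Derives.tensorR ih₁ ih₂
  | tensorL h ih => exact Derives.tensorL ih
  | oneR Γ => exact Derives.oneR _
  | oneL h ih => exact Derives.oneL ih
  | withR h₁ h₂ ih₁ ih₂ => exact Derives.withR ih₁ ih₂
  | withL₁ h ih => exact Derives.withL₁ ih
  | withL₂ h ih => exact Derives.withL₂ ih
  | topR Γ Δ => exact Derives.topR _ _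
  | limpR h ih => exact Derives.limpR ih
  | limpL h₁ h₂ ih₁ ih₂ => exact Derives.limpL ih₁ ih₂
  | bangR h ih => exact Derives.bangR ih
  | bangL h ih =>
    rw [Multiset.add_cons] at ih
    exact Derives.bangL ih

/-- A cut-like principle for 1. -/
lemma derives_cut_one {Γ Δ : Ctx} {F : Formula} (h : Derives Γ Δ F) (hF : F = Formula.one) :
    ∀ (Δ' : Ctx) (C : Formula), Derives Γ Δ' C → Derives Γ (Δ + Δ') C := by
  induction h with
  | init Γ a => exact absurd hF (by simp)
  | clone h ih =>
    intro Δ' C h'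
    have := ih hF Δ' C h'
    rw [Multiset.cons_add] at this
    exact Derives.clone this
  | tensorR h₁ h₂ ih₁ ih₂ => exact absurd hF (by simp)
  | tensorL h ih =>
    intro Δ' C h'
    have := ih hF Δ' C h'
    rw [Multiset.cons_add, Multiset.cons_add] at this
    rw [Multiset.cons_add]
    exact Derives.tensorL this
  | oneR Γ => intro Δ' C h'; simpa using h'
  | oneL h ih =>
    intro Δ' C h'
    rw [Multiset.cons_add]
    exact Derives.oneL (ih hF Δ' C h')
  | withR h₁ h₂ ih₁ ih₂ => exact absurd hF (by simp)
  | withL₁ h ih =>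
    intro Δ' C h'
    have := ih hF Δ' C h'
    rw [Multiset.cons_add] at this
    rw [Multiset.cons_add]
    exact Derives.withL₁ this
  | withL₂ h ih =>
    intro Δ' C h'
    have := ih hF Δ' C h'
    rw [Multiset.cons_add] at this
    rw [Multiset.cons_add]
    exact Derives.withL₂ this
  | topR Γ Δ => exact absurd hF (by simp)
  | limpR h ih => exact absurd hF (by simp)
  | @limpL Γ Δ₁ Δ₂ a B C h₁ h₂ ih₁ ih₂ =>
    intro Δ' C' h'
    have := ih₂ hF Δ' C' h'
    rw [Multiset.cons_add] at this
    have := Derives.limpL h₁ this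
    rw [Multiset.cons_add, add_assoc]
    exact this
  | bangR h ih => exact absurd hF (by simp)
  | @bangL Γ Δ A C h ih =>
    intro Δ' C' h'
    have hw : Derives (A ::ₘ Γ) Δ' C' := by
      rw [← Multiset.singleton_add]; exact derives_weaken _ h'
    rw [Multiset.cons_add]
    exact Derives.bangL (ih hF Δ' C' hw)

/-- Derivability is preserved backwards along τ-transitions. -/
lemma derives_back_tau {s t : State} (hst : Step s Label.tau t) {C : Formula}
    (h : Derives t.1 t.2 C) : Derives s.1 s.2 C := by
  cases hst with
  | @comm s₁ s₁' s₂ s₂' a h₁ h₂ =>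
    cases h₁ with
    | send Γa Δa =>
      cases h₂ with
      | recv Γb Δb _a B =>
        simp only [State.comp] at h ⊢
        rw [Multiset.add_cons] at h
        have h' := Derives.limpL (Derives.init (Γa + Γb) a) h
        have hms : (Formula.atom a ::ₘ Δa) + (Formula.limp a B ::ₘ Δb)
            = Formula.limp a B ::ₘ (({Formula.atom a} : Ctx) + (Δa + Δb)) := by
          rw [Multiset.singleton_add, Multiset.cons_add, Multiset.add_cons,
            Multiset.cons_swap]
        rw [hms]
        exact h'
  | tensor Γ Δ A B => exact Derives.tensorL h
  | one Γ Δ => exact Derives.oneL h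
  | with₁ Γ Δ A₁ A₂ => exact Derives.withL₁ h
  | with₂ Γ Δ A₁ A₂ => exact Derives.withL₂ h
  | bang Γ Δ A => exact Derives.bangL h
  | clone Γ Δ A => exact Derives.clone h

/-- Derivability is preserved backwards along ⇒τ. -/
lemma derives_back_wtau {s t : State} (hst : WeakTau s t) {C : Formula}
    (h : Derives t.1 t.2 C) : Derives s.1 s.2 C := by
  induction hst with
  | refl => exact h
  | tail hstep hstep' ih => exact ih (derives_back_tau hstep' h)

lemma simPre_of {R : State → State → Prop} (hR : IsSimulation R) {s t : State}
    (h : R s t) : SimPre s t := ⟨R, hR, h⟩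

/-- simulation implies provability. -/
theorem simPre_derives (Γ₁ Γ₂ Δ : Ctx) (A : Formula)
    (h : SimPre (Γ₁, ({A} : Ctx)) (Γ₂, Δ)) :
    Derives Γ₂ Δ A := by
  induction A generalizing Γ₁ Γ₂ Δ with
  | atom a =>
    obtain ⟨R, hSim, hst⟩ := h
    have hstep : Step (Γ₁, ({Formula.atom a} : Ctx)) (Label.send a) (Γ₁, 0) :=
      Step.send Γ₁ 0 a
    obtain ⟨t', hw, hRt⟩ := (hSim _ _ hst).2.2.1 (Label.send a) (Γ₁, 0) trivial hstep
    obtain ⟨u, v, hwu, hsv, hvt⟩ := hw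
    obtain ⟨Γ', hw2, -⟩ := (hSim _ _ hRt).1 rfl
    have dt' : Derives t'.1 t'.2 Formula.one := derives_back_wtau hw2 (Derives.oneR Γ')
    have dv : Derives v.1 v.2 Formula.one := derives_back_wtau hvt dt'
    cases hsv with
    | send Γ Δ'' =>
      have du : Derives Γ (Formula.atom a ::ₘ Δ'') (Formula.atom a) := by
        have := derives_cut_one dv rfl {Formula.atom a} _ (Derives.init Γ a)
        rwa [add_comm, Multiset.singleton_add] at this
      exact derives_back_wtau hwu du
  | one =>
    obtain ⟨R, hSim, hst⟩ := h
    have hstep : Step (Γ₁, ({Formula.one} : Ctx)) Label.tau (Γ₁, 0) := Step.one Γ₁ 0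
    obtain ⟨t', hw, hRt⟩ := (hSim _ _ hst).2.2.1 Label.tau (Γ₁, 0) trivial hstep
    obtain ⟨Γ', hw2, -⟩ := (hSim _ _ hRt).1 rfl
    exact derives_back_wtau hw (derives_back_wtau hw2 (Derives.oneR Γ'))
  | tensor A B ihA ihB =>
    obtain ⟨R, hSim, hst⟩ := h
    have hstep : Step (Γ₁, ({Formula.tensor A B} : Ctx)) Label.tau
        (Γ₁, A ::ₘ B ::ₘ 0) := Step.tensor Γ₁ 0 A B
    obtain ⟨t', hw, hRt⟩ := (hSim _ _ hst).2.2.1 Label.tau _ trivial hstep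
    have hcomp : (Γ₁, A ::ₘ B ::ₘ (0 : Ctx)) =
        State.comp (Γ₁, ({A} : Ctx)) ((0 : Ctx), ({B} : Ctx)) := by
      simp [State.comp]
    obtain ⟨t₁, t₂, hw2, hR1, hR2⟩ := (hSim _ _ hRt).2.1 _ _ hcomp
    have dA := ihA Γ₁ t₁.1 t₁.2 (simPre_of hSim (by simpa using hR1))
    have dB := ihB 0 t₂.1 t₂.2 (simPre_of hSim (by simpa using hR2))
    have dA' : Derives (t₁.1 + t₂.1) t₁.2 A := by
      rw [add_comm]; exact derives_weaken _ dA
    have dB' : Derives (t₁.1 + t₂.1) t₂.2 B := derives_weaken _ dB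
    have dcomp : Derives (State.comp t₁ t₂).1 (State.comp t₁ t₂).2
        (Formula.tensor A B) := Derives.tensorR dA' dB'
    exact derives_back_wtau hw (derives_back_wtau hw2 dcomp)
  | top => exact Derives.topR _ _
  | with_ A B ihA ihB =>
    obtain ⟨R, hSim, hst⟩ := h
    have hstepA : Step (Γ₁, ({Formula.with_ A B} : Ctx)) Label.tau
        (Γ₁, ({A} : Ctx)) := Step.with₁ Γ₁ 0 A B
    have hstepB : Step (Γ₁, ({Formula.with_ A B} : Ctx)) Label.tau
        (Γ₁, ({B} : Ctx)) := Step.with₂ Γ₁ 0 A B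
    obtain ⟨tA, hwA, hRA⟩ := (hSim _ _ hst).2.2.1 Label.tau _ trivial hstepA
    obtain ⟨tB, hwB, hRB⟩ := (hSim _ _ hst).2.2.1 Label.tau _ trivial hstepB
    have dA := ihA Γ₁ tA.1 tA.2 (simPre_of hSim (by simpa using hRA))
    have dB := ihB Γ₁ tB.1 tB.2 (simPre_of hSim (by simpa using hRB))
    exact Derives.withR (derives_back_wtau hwA dA) (derives_back_wtau hwB dB)
  | limp a B ihB =>
    obtain ⟨R, hSim, hst⟩ := h
    have hstep : Step (Γ₁, ({Formula.limp a B} : Ctx)) (Label.recv a)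
        (Γ₁, ({B} : Ctx)) := Step.recv Γ₁ 0 a B
    obtain ⟨t', hw, hRt⟩ := (hSim _ _ hst).2.2.2 a _ hstep
    have dB := ihB Γ₁ t'.1 t'.2 (simPre_of hSim (by simpa using hRt))
    exact Derives.limpR (derives_back_wtau hw dB)
  | bang A ihA =>
    obtain ⟨R, hSim, hst⟩ := h
    have hstep : Step (Γ₁, ({Formula.bang A} : Ctx)) Label.tau
        (A ::ₘ Γ₁, 0) := Step.bang Γ₁ 0 A
    obtain ⟨t', hw, hRt⟩ := (hSim _ _ hst).2.2.1 Label.tau _ trivial hstep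
    obtain ⟨Γ', hw2, hR'⟩ := (hSim _ _ hRt).1 rfl
    have hclone : Step ((A ::ₘ Γ₁ : Ctx), (0 : Ctx)) Label.tau
        (A ::ₘ Γ₁, ({A} : Ctx)) := Step.clone Γ₁ 0 A
    obtain ⟨t'', hw3, hRt''⟩ := (hSim _ _ hR').2.2.1 Label.tau _ trivial hclone
    have dA := ihA (A ::ₘ Γ₁) t''.1 t''.2 (simPre_of hSim (by simpa using hRt''))
    have dΓ' : Derives Γ' 0 A := derives_back_wtau hw3 dA
    exact derives_back_wtau hw (derives_back_wtau hw2 (Derives.bangR dΓ'))
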